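/- arXiv:2509.03532 — 6 statements merged into one kernel-verified Lean document; each statement's English description precedes it below -/
import Mathlib

section
/- If f(z) = Σ_{s≥0} a_s z^s is analytic on the unit disk with |f(z)| ≤ 1 for all |z| < 1, then Σ_{s≥0} |a_s| r^s ≤ 1 for all 0 ≤ r ≤ 1/3. -/
open Metric Finset Complex FormalMultilinearSeries

section helpers

/-- Schwarz–Pick inequality at the origin. -/
lemma sp_aux (H : ℂ → ℂ) (hd : DifferentiableOn ℂ H (ball (0:ℂ) 1))
    (hm : ∀ w : ℂ, ‖w‖ < 1 → ‖H w‖ < 1) :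
    ‖deriv H 0‖ ≤ 1 - ‖H 0‖ ^ 2 := by
  set c : ℂ := H 0 with hc
  have hc1 : ‖c‖ < 1 := hm 0 (by norm_num)
  have hnormsq : ∀ z : ℂ, Complex.normSq z = ‖z‖ ^ 2 := fun z => by
    rw [Complex.normSq_eq_norm_sq]
  have hcc : ‖c‖ ^ 2 < 1 := by
    have := norm_nonneg c; nlinarith
  have hkey : ∀ v : ℂ, Complex.normSq (1 - (starRingEnd ℂ) c * v) - Complex.normSq (v - c)
      = (1 - Complex.normSq c) * (1 - Complex.normSq v) := by
    intro v
    simp only [Complex.normSq_apply, Complex.sub_re, Complex.sub_im, Complex.mul_re,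
      Complex.mul_im, Complex.one_re, Complex.one_im, Complex.conj_re, Complex.conj_im]
    ring
  have hlt : ∀ v : ℂ, ‖v‖ < 1 → ‖v - c‖ < ‖1 - (starRingEnd ℂ) c * v‖ := by
    intro v hv
    have h := hkey v
    rw [hnormsq, hnormsq, hnormsq, hnormsq] at h
    have hvv : ‖v‖ ^ 2 < 1 := by
      have := norm_nonneg v; nlinarith
    have haux : 0 < (1 - ‖c‖ ^ 2) * (1 - ‖v‖ ^ 2) := mul_pos (by linarith) (by linarith)
    nlinarith [norm_nonneg (v - c), norm_nonneg (1 - (starRingEnd ℂ) c * v)]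
  have hden : ∀ v : ℂ, ‖v‖ < 1 → (1 : ℂ) - (starRingEnd ℂ) c * v ≠ 0 := by
    intro v hv h
    have := hlt v hv
    rw [h] at this
    rw [norm_zero] at this
    exact absurd this (norm_nonneg _).not_gt
  set g : ℂ → ℂ := fun z => (H z - c) / (1 - (starRingEnd ℂ) c * H z) with hgdef
  have hgd : DifferentiableOn ℂ g (ball (0:ℂ) 1) := by
    apply DifferentiableOn.div (hd.sub (differentiableOn_const c))
      ((differentiableOn_const 1).sub ((differentiableOn_const _).mul hd))
    intro z hz
    exact hden _ (hm z (mem_ball_zero_iff.mp hz))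
  have hg0 : g 0 = 0 := by simp [hgdef, ← hc]
  have hmaps : Set.MapsTo g (ball (0:ℂ) 1) (ball (g 0) 1) := by
    intro z hz
    rw [hg0, mem_ball_zero_iff]
    have hz' : ‖z‖ < 1 := mem_ball_zero_iff.mp hz
    have h1 := hlt (H z) (hm z hz')
    rw [hgdef]
    simp only [norm_div]
    rw [div_lt_one (lt_of_le_of_lt (norm_nonneg _) h1)]
    exact h1
  have hschwarz : ‖deriv g 0‖ ≤ 1 := by
    have := Complex.norm_deriv_le_div_of_mapsTo_ball hgd (hmaps.mono_right ball_subset_closedBall) one_pos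
    simpa using this
  have hH0 : DifferentiableAt ℂ H 0 := hd.differentiableAt (isOpen_ball.mem_nhds (mem_ball_self one_pos))
  set φ : ℂ → ℂ := fun w => (w - c) / (1 - (starRingEnd ℂ) c * w) with hφdef
  have hdenc := hden c hc1
  have h1 : HasDerivAt (fun w : ℂ => w - c) 1 c := (hasDerivAt_id c).sub_const c
  have h2 : HasDerivAt (fun w : ℂ => (1:ℂ) - (starRingEnd ℂ) c * w) (-((starRingEnd ℂ) c)) c := by
    simpa using (((hasDerivAt_id c).const_mul ((starRingEnd ℂ) c)).const_sub 1)
  have h3 := h1.div h2 hdenc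
  have hφd : DifferentiableAt ℂ φ c := h3.differentiableAt
  have hdφ : deriv φ c = (1 - (starRingEnd ℂ) c * c)⁻¹ := by
    rw [show φ = ((fun w : ℂ => w - c) / fun w => 1 - (starRingEnd ℂ) c * w) from rfl, h3.deriv]
    rw [sub_self, zero_mul, sub_zero, one_mul, sq]
    field_simp
  have hderiv : deriv g 0 = deriv φ c * deriv H 0 := by
    have : g = φ ∘ H := rfl
    rw [this, deriv_comp 0 hφd hH0, ← hc]
  have h4 : deriv H 0 = (1 - (starRingEnd ℂ) c * c) * deriv g 0 := by
    rw [hderiv, hdφ, ← mul_assoc, mul_inv_cancel₀ hdenc, one_mul]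
  have h5 : ‖(1:ℂ) - (starRingEnd ℂ) c * c‖ = 1 - ‖c‖ ^ 2 := by
    have : (starRingEnd ℂ) c * c = ((‖c‖ ^ 2 : ℝ) : ℂ) := by
      rw [mul_comm, Complex.mul_conj, hnormsq]
    rw [this]
    rw [show (1:ℂ) - ((‖c‖ ^ 2 : ℝ) : ℂ) = (((1 - ‖c‖ ^ 2 : ℝ)) : ℂ) by push_cast; ring]
    rw [Complex.norm_real, Real.norm_of_nonneg (by linarith)]
  calc ‖deriv H 0‖ = ‖(1:ℂ) - (starRingEnd ℂ) c * c‖ * ‖deriv g 0‖ := by rw [h4, norm_mul]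
    _ ≤ ‖(1:ℂ) - (starRingEnd ℂ) c * c‖ * 1 := by
        apply mul_le_mul_of_nonneg_left hschwarz (norm_nonneg _)
    _ = 1 - ‖c‖ ^ 2 := by rw [mul_one, h5]


lemma avg_sum (a : ℕ → ℂ) (f : ℂ → ℂ)
    (hsum : ∀ z : ℂ, ‖z‖ < 1 → HasSum (fun s : ℕ => a s * z ^ s) (f z))
    (hb : ∀ z : ℂ, ‖z‖ < 1 → ‖f z‖ ≤ 1)
    (n : ℕ) (hn : 0 < n) (w : ℂ) (hw : ‖w‖ < 1) :
    ∃ S : ℂ, HasSum (fun m : ℕ => a (n * m) * w ^ m) S ∧ ‖S‖ ≤ 1 := by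
  obtain ⟨z, hz⟩ := IsAlgClosed.exists_pow_nat_eq w hn
  have hzn : ‖z‖ < 1 := by
    by_contra h
    push_neg at h
    have h1 : (1:ℝ) ≤ ‖z‖ ^ n := one_le_pow₀ h
    rw [← hz, norm_pow] at hw
    linarith
  set ω : ℂ := Complex.exp (2 * Real.pi * Complex.I / n) with hω
  have hprim : IsPrimitiveRoot ω n := Complex.isPrimitiveRoot_exp n hn.ne'
  have hωn : ‖ω‖ = 1 := hprim.norm'_eq_one hn.ne'
  have hargnorm : ∀ k : ℕ, ‖ω ^ k * z‖ < 1 := by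
    intro k
    rw [norm_mul, norm_pow, hωn, one_pow, one_mul]
    exact hzn
  have hncC : (n : ℂ) ≠ 0 := Nat.cast_ne_zero.mpr hn.ne'
  set S : ℂ := ∑ k ∈ Finset.range n, (n:ℂ)⁻¹ * f (ω ^ k * z) with hS
  have hS1 : ‖S‖ ≤ 1 := by
    calc ‖S‖ ≤ ∑ k ∈ Finset.range n, ‖(n:ℂ)⁻¹ * f (ω ^ k * z)‖ := norm_sum_le _ _
      _ ≤ ∑ k ∈ Finset.range n, (n:ℝ)⁻¹ := by
          apply Finset.sum_le_sum
          intro k _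
          rw [norm_mul, norm_inv]
          have h1 : ‖((n:ℂ))‖ = (n:ℝ) := by simp
          rw [h1]
          have h2 := hb _ (hargnorm k)
          have h3 : (0:ℝ) ≤ (n:ℝ)⁻¹ := by positivity
          calc (n:ℝ)⁻¹ * ‖f (ω ^ k * z)‖ ≤ (n:ℝ)⁻¹ * 1 := by
                exact mul_le_mul_of_nonneg_left h2 h3
            _ = (n:ℝ)⁻¹ := mul_one _
      _ = 1 := by
          rw [Finset.sum_const, Finset.card_range, nsmul_eq_mul]
          field_simp
  have hsum2 : HasSum (fun s : ℕ => ∑ k ∈ Finset.range n, (n:ℂ)⁻¹ * (a s * (ω ^ k * z) ^ s)) S :=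
    hasSum_sum fun k _ => (hsum (ω ^ k * z) (hargnorm k)).mul_left _
  have heq : (fun s : ℕ => ∑ k ∈ Finset.range n, (n:ℂ)⁻¹ * (a s * (ω ^ k * z) ^ s))
      = fun s : ℕ => if n ∣ s then a s * z ^ s else 0 := by
    funext s
    have hterm : ∀ k ∈ Finset.range n, (n:ℂ)⁻¹ * (a s * (ω ^ k * z) ^ s)
        = (n:ℂ)⁻¹ * (a s * z ^ s) * (ω ^ s) ^ k := by
      intro k _
      rw [mul_pow, ← pow_mul, mul_comm k s, pow_mul]
      ring
    rw [Finset.sum_congr rfl hterm, ← Finset.mul_sum]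
    by_cases hdvd : n ∣ s
    · have hω1 : ω ^ s = 1 := (hprim.pow_eq_one_iff_dvd s).mpr hdvd
      rw [if_pos hdvd, hω1]
      simp only [one_pow, Finset.sum_const, Finset.card_range, nsmul_eq_mul, mul_one]
      rw [mul_comm ((n:ℂ)⁻¹ * (a s * z ^ s)) (n:ℂ), ← mul_assoc, mul_inv_cancel₀ hncC, one_mul]
    · have hω1 : ω ^ s ≠ 1 := fun h => hdvd ((hprim.pow_eq_one_iff_dvd s).mp h)
      rw [if_neg hdvd, geom_sum_eq hω1 n]
      have hpow : (ω ^ s) ^ n = 1 := by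
        rw [← pow_mul, mul_comm s n, pow_mul, hprim.pow_eq_one, one_pow]
      rw [hpow, sub_self, zero_div, mul_zero]
  rw [heq] at hsum2
  have hinj : Function.Injective (fun m : ℕ => n * m) := fun x y h => by
    exact Nat.eq_of_mul_eq_mul_left hn h
  have hzero : ∀ s : ℕ, s ∉ Set.range (fun m : ℕ => n * m) →
      (if n ∣ s then a s * z ^ s else 0) = 0 := by
    intro s hs
    rw [if_neg]
    intro ⟨m, hm⟩
    exact hs ⟨m, hm.symm⟩
  have hsum3 := (hinj.hasSum_iff hzero).mpr hsum2
  refine ⟨S, ?_, hS1⟩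
  have heq2 : ((fun s : ℕ => if n ∣ s then a s * z ^ s else 0) ∘ (fun m : ℕ => n * m))
      = fun m : ℕ => a (n * m) * w ^ m := by
    funext m
    simp only [Function.comp_apply]
    rw [if_pos ⟨m, rfl⟩, pow_mul, hz]
  rw [heq2] at hsum3
  exact hsum3


lemma hasFPS (b : ℕ → ℂ) (H : ℂ → ℂ)
    (hH : ∀ w : ℂ, ‖w‖ < 1 → HasSum (fun m : ℕ => b m * w ^ m) (H w)) :
    HasFPowerSeriesOnBall H (FormalMultilinearSeries.ofScalars ℂ b) 0 1 := by
  constructor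
  · -- 1 ≤ radius
    apply ENNReal.le_of_forall_nnreal_lt
    intro r hr
    have hr1 : (r : ℝ) < 1 := by exact_mod_cast hr
    have hsum := (hH (r : ℂ) (by simpa using hr1)).summable
    have htend : Filter.Tendsto (fun m : ℕ => ‖ofScalars ℂ b m‖ * (r:ℝ) ^ m)
        Filter.atTop (nhds 0) := by
      have h0 := hsum.tendsto_atTop_zero
      have := (continuous_norm.tendsto (0:ℂ)).comp h0
      simp only [Function.comp_def, norm_zero] at this
      refine this.congr fun m => ?_
      rw [norm_mul, norm_pow, ofScalars_norm]
      simp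
    exact (ofScalars ℂ b).le_radius_of_tendsto htend
  · norm_num
  · intro y hy
    have hy' : ‖y‖ < 1 := by
      have h := hy
      rw [show (1 : ENNReal) = ENNReal.ofReal (1:ℝ) by simp, Metric.eball_ofReal] at h
      simpa using h
    rw [zero_add]
    have heq : (fun n : ℕ => ofScalars ℂ b n fun _ => y) = fun n : ℕ => b n * y ^ n := by
      funext n
      rw [ofScalars_apply_eq, smul_eq_mul]
    rw [heq]
    exact hH y hy'

lemma coeff_bound (b : ℕ → ℂ) (H : ℂ → ℂ)
    (hH : ∀ w : ℂ, ‖w‖ < 1 → HasSum (fun m : ℕ => b m * w ^ m) (H w))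
    (hm : ∀ w : ℂ, ‖w‖ < 1 → ‖H w‖ < 1) :
    ‖b 1‖ ≤ 1 - ‖b 0‖ ^ 2 := by
  have hps := hasFPS b H hH
  have hball : Metric.eball (0:ℂ) 1 = Metric.ball (0:ℂ) 1 := by
    rw [show (1 : ENNReal) = ENNReal.ofReal (1:ℝ) by simp, Metric.eball_ofReal]
  have hd : DifferentiableOn ℂ H (Metric.ball (0:ℂ) 1) := by
    rw [← hball]; exact hps.differentiableOn
  have h0 : H 0 = b 0 := by
    have := hps.coeff_zero (fun _ => (0:ℂ))
    rw [FormalMultilinearSeries.ofScalars_apply_eq] at this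
    simpa using this.symm
  have h1 : deriv H 0 = b 1 := by
    rw [hps.hasFPowerSeriesAt.deriv]
    show FormalMultilinearSeries.ofScalars ℂ b 1 (fun _ => (1:ℂ)) = b 1
    rw [FormalMultilinearSeries.ofScalars_apply_eq]; simp
  have := sp_aux H hd hm
  rw [h0, h1] at this
  exact this


lemma coeff_le (a : ℕ → ℂ) (f : ℂ → ℂ)
    (hsum : ∀ z : ℂ, ‖z‖ < 1 → HasSum (fun s : ℕ => a s * z ^ s) (f z))
    (hb : ∀ z : ℂ, ‖z‖ < 1 → ‖f z‖ ≤ 1)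
    (n : ℕ) (hn : 0 < n) : ‖a n‖ ≤ 1 - ‖a 0‖ ^ 2 := by
  have key : ∀ t : ℝ, t ∈ Set.Ioo (0:ℝ) 1 → t * ‖a n‖ ≤ 1 - t ^ 2 * ‖a 0‖ ^ 2 := by
    rintro t ⟨ht0, ht1⟩
    have hnt : ‖(t:ℂ)‖ = t := by
      rw [Complex.norm_real, Real.norm_of_nonneg ht0.le]
    set b : ℕ → ℂ := fun m => (t:ℂ) * a (n * m) with hbdef
    set H : ℂ → ℂ := fun w => ∑' m : ℕ, b m * w ^ m with hHdef
    have hkey : ∀ w : ℂ, ‖w‖ < 1 → HasSum (fun m : ℕ => b m * w ^ m) (H w) ∧ ‖H w‖ < 1 := by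
      intro w hw
      obtain ⟨S, hS, hS1⟩ := avg_sum a f hsum hb n hn w hw
      have h2 : HasSum (fun m : ℕ => b m * w ^ m) ((t:ℂ) * S) := by
        have h3 := hS.mul_left (t:ℂ)
        simpa [hbdef, mul_assoc] using h3
      have hHw : H w = (t:ℂ) * S := h2.tsum_eq
      constructor
      · rw [hHw]; exact h2
      · rw [hHw, norm_mul, hnt]
        calc t * ‖S‖ ≤ t * 1 := mul_le_mul_of_nonneg_left hS1 ht0.le
          _ < 1 := by linarith
    have hcb := coeff_bound b H (fun w hw => (hkey w hw).1) (fun w hw => (hkey w hw).2)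
    have e1 : ‖b 1‖ = t * ‖a n‖ := by
      rw [hbdef]; simp only [mul_one]; rw [norm_mul, hnt]
    have e0 : ‖b 0‖ ^ 2 = t ^ 2 * ‖a 0‖ ^ 2 := by
      rw [hbdef]; simp only [mul_zero]; rw [norm_mul, hnt, mul_pow]
    rw [e1, e0] at hcb
    exact hcb
  have hmem : (1:ℝ) ∈ closure (Set.Ioo (0:ℝ) 1) := by
    rw [closure_Ioo (by norm_num : (0:ℝ) ≠ 1)]
    exact ⟨by norm_num, le_refl 1⟩
  haveI hne : (nhdsWithin (1:ℝ) (Set.Ioo 0 1)).NeBot :=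
    mem_closure_iff_nhdsWithin_neBot.mp hmem
  have h1 : Filter.Tendsto (fun t : ℝ => t * ‖a n‖) (nhdsWithin 1 (Set.Ioo 0 1))
      (nhds (‖a n‖)) := by
    have hcont : Continuous fun t : ℝ => t * ‖a n‖ := by continuity
    have := (hcont.tendsto 1).mono_left (nhdsWithin_le_nhds (s := Set.Ioo (0:ℝ) 1))
    simpa using this
  have h2 : Filter.Tendsto (fun t : ℝ => 1 - t ^ 2 * ‖a 0‖ ^ 2) (nhdsWithin 1 (Set.Ioo 0 1))
      (nhds (1 - ‖a 0‖ ^ 2)) := by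
    have hcont : Continuous fun t : ℝ => 1 - t ^ 2 * ‖a 0‖ ^ 2 := by continuity
    have := (hcont.tendsto 1).mono_left (nhdsWithin_le_nhds (s := Set.Ioo (0:ℝ) 1))
    simpa using this
  refine le_of_tendsto_of_tendsto h1 h2 ?_
  filter_upwards [self_mem_nhdsWithin] with t ht
  exact key t ht

set_option maxHeartbeats 1000000 in
theorem stmt_5 (f : ℂ → ℂ) (a : ℕ → ℂ)
    (hsum : ∀ z : ℂ, ‖z‖ < 1 → HasSum (fun s : ℕ => a s * z ^ s) (f z))
    (hb : ∀ z : ℂ, ‖z‖ < 1 → ‖f z‖ ≤ 1) :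
    ∀ r : ℝ, 0 ≤ r → r ≤ 1 / 3 → ∑' s : ℕ, ‖a s‖ * r ^ s ≤ 1 := by
  intro r hr0 hr13
  have hr1 : r < 1 := by linarith
  have ha0 : ‖a 0‖ ≤ 1 := by
    have h1 : HasSum (fun s : ℕ => a s * (0:ℂ) ^ s) (f 0) := hsum 0 (by simp)
    have h2 : HasSum (fun s : ℕ => a s * (0:ℂ) ^ s) (a 0 * 0 ^ 0) :=
      hasSum_single 0 (fun s hs => by rw [zero_pow hs, mul_zero])
    have h3 : f 0 = a 0 := by
      have := h1.unique h2
      simpa using this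
    rw [← h3]
    exact hb 0 (by norm_num)
  set c : ℝ := ‖a 0‖ with hcdef
  have hc0 : 0 ≤ c := norm_nonneg _
  have hc2 : 0 ≤ 1 - c ^ 2 := by nlinarith
  have hK : ∀ s : ℕ, 1 ≤ s → ‖a s‖ ≤ 1 - c ^ 2 := fun s hs =>
    coeff_le a f hsum hb s hs
  have hbound : ∀ s : ℕ, ‖a s‖ ≤ 1 := by
    intro s
    rcases Nat.eq_zero_or_pos s with h | h
    · rw [h]; exact ha0
    · calc ‖a s‖ ≤ 1 - c ^ 2 := hK s h
        _ ≤ 1 := by nlinarith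
  have hsummable : Summable (fun s : ℕ => ‖a s‖ * r ^ s) := by
    apply Summable.of_nonneg_of_le (fun s => by positivity) (fun s => ?_)
      (summable_geometric_of_lt_one hr0 hr1)
    calc ‖a s‖ * r ^ s ≤ 1 * r ^ s := by
          apply mul_le_mul_of_nonneg_right (hbound s) (by positivity)
      _ = r ^ s := one_mul _
  rw [hsummable.tsum_eq_zero_add]
  simp only [pow_zero, mul_one]
  have hsumtail : Summable (fun s : ℕ => ‖a (s+1)‖ * r ^ (s+1)) :=
    (summable_nat_add_iff 1).mpr hsummable
  have hgeo : Summable (fun s : ℕ => ((1 - c ^ 2) * r) * r ^ s) :=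
    (summable_geometric_of_lt_one hr0 hr1).mul_left _
  have htail : ∑' s : ℕ, ‖a (s+1)‖ * r ^ (s+1) ≤ (1 - c ^ 2) * r * (1 - r)⁻¹ := by
    have h1 : ∑' s : ℕ, ‖a (s+1)‖ * r ^ (s+1) ≤ ∑' s : ℕ, ((1 - c ^ 2) * r) * r ^ s := by
      apply Summable.tsum_le_tsum _ hsumtail hgeo
      intro s
      rw [pow_succ]
      calc ‖a (s+1)‖ * (r ^ s * r) ≤ (1 - c ^ 2) * (r ^ s * r) := by
            apply mul_le_mul_of_nonneg_right (hK (s+1) (by omega)) (by positivity)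
        _ = (1 - c ^ 2) * r * r ^ s := by ring
    rw [tsum_mul_left, tsum_geometric_of_lt_one hr0 hr1] at h1
    exact h1
  have hr2 : r * (1 - r)⁻¹ ≤ 1 / 2 := by
    rw [← div_eq_mul_inv, div_le_iff₀ (by linarith)]
    linarith
  calc ‖a 0‖ + ∑' s : ℕ, ‖a (s+1)‖ * r ^ (s+1)
      ≤ c + (1 - c ^ 2) * r * (1 - r)⁻¹ := by
        rw [hcdef]
        exact add_le_add_right htail _
    _ = c + (1 - c ^ 2) * (r * (1 - r)⁻¹) := by ring
    _ ≤ c + (1 - c ^ 2) * (1 / 2) := by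
        exact add_le_add_right (mul_le_mul_of_nonneg_left hr2 hc2) _
    _ ≤ 1 := by nlinarith [sq_nonneg (1 - c)]
end helpers
end

section
/- Let f(z) = Σ_{s≥0} a_s z^s be analytic on the unit disk with |f| ≤ 1, let b = |a_0|, and let 0 ≤ r < 1. Then Σ_{s≥1} |a_s| r^s ≤ (1 - b²) r / (1 - b r). -/
open Complex Metric Finset Filter

private lemma mobius_norm {c u : ℂ} (hc : ‖c‖ ≤ 1) (hu : ‖u‖ ≤ 1) :
    ‖u - c‖ ≤ ‖1 - (starRingEnd ℂ) c * u‖ := by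
  have hid : Complex.normSq (1 - (starRingEnd ℂ) c * u) - Complex.normSq (u - c)
      = (1 - Complex.normSq c) * (1 - Complex.normSq u) := by
    simp only [Complex.normSq_apply, Complex.sub_re, Complex.sub_im, Complex.mul_re,
      Complex.mul_im, Complex.conj_re, Complex.conj_im, Complex.one_re, Complex.one_im]
    ring
  have hc2 : Complex.normSq c ≤ 1 := by
    rw [← Complex.sq_norm] at *; nlinarith [norm_nonneg c]
  have hu2 : Complex.normSq u ≤ 1 := by
    rw [← Complex.sq_norm] at *; nlinarith [norm_nonneg u]
  have hle : Complex.normSq (u - c) ≤ Complex.normSq (1 - (starRingEnd ℂ) c * u) := by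
    nlinarith
  simpa only [Complex.norm_def] using Real.sqrt_le_sqrt hle


private lemma root_filter {n : ℕ} (hn : 0 < n) (s : ℕ) :
    ∑ k ∈ Finset.range n, ((Complex.exp ((2 * Real.pi / n : ℝ) * Complex.I)) ^ s) ^ k
      = if n ∣ s then (n : ℂ) else 0 := by
  set ω := Complex.exp ((2 * Real.pi / n : ℝ) * Complex.I) with hω
  have hπ : (Real.pi : ℂ) ≠ 0 := by exact_mod_cast Real.pi_ne_zero
  have hnz : (n : ℂ) ≠ 0 := Nat.cast_ne_zero.mpr hn.ne'
  have hωn : ω ^ n = 1 := by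
    rw [hω, ← Complex.exp_nat_mul]
    have h1 : (n : ℂ) * (((2 * Real.pi / n : ℝ) : ℂ) * Complex.I)
        = 2 * Real.pi * Complex.I := by push_cast; field_simp
    rw [h1, Complex.exp_two_pi_mul_I]
  have hone : ω ^ s = 1 ↔ n ∣ s := by
    rw [hω, ← Complex.exp_nat_mul, Complex.exp_eq_one_iff]
    constructor
    · rintro ⟨m, hm⟩
      push_cast at hm
      have h2 : (s : ℂ) * (2 * Real.pi * Complex.I) = (m * n : ℂ) * (2 * Real.pi * Complex.I) := by
        field_simp at hm
        linear_combination (2 * Real.pi * Complex.I) * hm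
      have h3 : (s : ℂ) = (m * n : ℂ) :=
        mul_right_cancel₀ (by simp [hπ, Complex.I_ne_zero, Real.pi_ne_zero]) h2
      have h4 : (s : ℤ) = m * n := by exact_mod_cast h3
      exact Int.natCast_dvd_natCast.mp ⟨m, by rw [h4]; ring⟩
    · rintro ⟨j, rfl⟩
      exact ⟨j, by push_cast; field_simp⟩
  by_cases h : n ∣ s
  · rw [if_pos h, hone.mpr h]
    simp
  · rw [if_neg h]
    have hx1 : ω ^ s ≠ 1 := fun hh => h (hone.mp hh)
    rw [geom_sum_eq hx1, ← pow_mul, mul_comm s n, pow_mul, hωn, one_pow]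
    simp

private lemma coeff_bound_s7 (f : ℂ → ℂ) (a : ℕ → ℂ)
    (hsum : ∀ z : ℂ, ‖z‖ < 1 → HasSum (fun s : ℕ => a s * z ^ s) (f z))
    (hb : ∀ z : ℂ, ‖z‖ < 1 → ‖f z‖ ≤ 1)
    (n : ℕ) (hn : 0 < n) : ‖a n‖ ≤ 1 - ‖a 0‖ ^ 2 := by
  have ha0 : a 0 = f 0 := by
    have h := hsum 0 (by norm_num)
    have h2 : HasSum (fun s : ℕ => a s * (0:ℂ) ^ s) (a 0 * (0:ℂ) ^ 0) :=
      hasSum_single 0 (fun s hs => by simp [zero_pow hs])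
    simpa using h2.unique h
  have ha0le : ‖a 0‖ ≤ 1 := by rw [ha0]; exact hb 0 (by norm_num)
  have hsq : ‖a 0‖ ^ 2 ≤ 1 := pow_le_one₀ (norm_nonneg _) ha0le
  -- uniform bound on coefficients at radius t
  have hbdd : ∀ t : ℝ, 0 ≤ t → t < 1 → ∃ C : ℝ, ∀ s : ℕ, ‖a s‖ * t ^ s ≤ C := by
    intro t ht0 ht1
    have hz : ‖(t : ℂ)‖ < 1 := by simpa [Complex.norm_real, _root_.abs_of_nonneg ht0] using ht1
    have h2 : Tendsto (fun s : ℕ => ‖a s * (t:ℂ) ^ s‖) atTop (nhds 0) := by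
      simpa using ((hsum t hz).summable.tendsto_atTop_zero).norm
    obtain ⟨C, hC⟩ := h2.bddAbove_range
    refine ⟨C, fun s => ?_⟩
    have h3 := hC (Set.mem_range_self s)
    simpa [norm_mul, norm_pow, Complex.norm_real, _root_.abs_of_nonneg ht0] using h3
  set c : ℕ → ℂ := fun j => a (n * j) with hcdef
  set q := FormalMultilinearSeries.ofScalars ℂ c with hqdef
  have hrad : 1 ≤ q.radius := by
    apply ENNReal.le_of_forall_nnreal_lt
    intro r hr
    have hr1 : (r : ℝ) < 1 := by exact_mod_cast hr
    set t : ℝ := (r : ℝ) ^ ((n : ℝ)⁻¹) with htdef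
    have ht0 : 0 ≤ t := Real.rpow_nonneg r.coe_nonneg _
    have ht1 : t < 1 := by
      apply Real.rpow_lt_one r.coe_nonneg hr1
      positivity
    have htn : t ^ n = (r : ℝ) := by
      rw [htdef, ← Real.rpow_natCast (_ ^ _) n, ← Real.rpow_mul r.coe_nonneg]
      rw [inv_mul_cancel₀ (by exact_mod_cast hn.ne'), Real.rpow_one]
    obtain ⟨C, hC⟩ := hbdd t ht0 ht1
    apply q.le_radius_of_bound C
    intro j
    have hnorm : ‖q j‖ = ‖a (n * j)‖ := by
      rw [hqdef]; exact FormalMultilinearSeries.ofScalars_norm _ _ _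
    rw [hnorm, ← htn, ← pow_mul]
    exact hC (n * j)
  have hball : HasFPowerSeriesOnBall q.sum q 0 1 :=
    (q.hasFPowerSeriesOnBall (lt_of_lt_of_le one_pos hrad)).mono one_pos hrad
  set H := q.sum with hHdef
  have hdiff : DifferentiableOn ℂ H (ball (0:ℂ) 1) := by
    have h1 := hball.differentiableOn
    have h2 : Metric.eball (0:ℂ) 1 = ball (0:ℂ) 1 := by
      rw [← ENNReal.coe_one, Metric.emetric_ball_nnreal]; norm_num
    rwa [h2] at h1
  have hHval : ∀ w : ℂ, H w = ∑' j : ℕ, a (n * j) * w ^ j := by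
    intro w
    rw [hHdef, FormalMultilinearSeries.sum]
    exact tsum_congr fun j => by
      rw [hqdef, FormalMultilinearSeries.ofScalars_apply_eq, smul_eq_mul]
  have hH0 : H 0 = a 0 := by
    rw [hHval]
    have h2 : HasSum (fun j : ℕ => a (n * j) * (0:ℂ) ^ j) (a (n * 0) * (0:ℂ) ^ 0) :=
      hasSum_single 0 (fun j hj => by simp [zero_pow hj])
    simpa using h2.tsum_eq
  have hderiv : deriv H 0 = a n := by
    rw [hball.hasFPowerSeriesAt.deriv]
    show q 1 (fun _ => 1) = a n
    rw [hqdef, FormalMultilinearSeries.ofScalars_apply_eq, smul_eq_mul]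
    simp [hcdef]
  set ω : ℂ := Complex.exp ((2 * Real.pi / n : ℝ) * Complex.I) with hωdef
  have hωabs : ‖ω‖ = 1 := by
    rw [hωdef, Complex.norm_exp_ofReal_mul_I]
  have hHle : ∀ w : ℂ, ‖w‖ < 1 → ‖H w‖ ≤ 1 := by
    intro w hw
    obtain ⟨z, hzn, hz1⟩ : ∃ z : ℂ, z ^ n = w ∧ ‖z‖ < 1 := by
      rcases eq_or_ne w 0 with rfl | hw0
      · exact ⟨0, by simp [zero_pow hn.ne'], by simp⟩
      · refine ⟨Complex.exp ((n : ℂ)⁻¹ * Complex.log w), ?_, ?_⟩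
        · rw [← Complex.exp_nat_mul, ← mul_assoc,
            mul_inv_cancel₀ (Nat.cast_ne_zero.mpr hn.ne' : (n:ℂ) ≠ 0), one_mul,
            Complex.exp_log hw0]
        · rw [Complex.norm_exp]
          have hre : ((n : ℂ)⁻¹ * Complex.log w).re
              = (n : ℝ)⁻¹ * Real.log ‖w‖ := by
            have h6 : ((n : ℂ))⁻¹ = (((n:ℝ)⁻¹ : ℝ) : ℂ) := by push_cast; ring
            rw [h6, Complex.re_ofReal_mul, Complex.log_re]
          rw [hre, Real.exp_lt_one_iff]
          have habs0 : 0 < ‖w‖ := norm_pos_iff.mpr hw0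
          have habs1 : ‖w‖ < 1 := hw
          exact mul_neg_of_pos_of_neg (by positivity) (Real.log_neg habs0 habs1)
    have hrot : ∀ k : ℕ, ‖ω ^ k * z‖ < 1 := fun k => by
      rw [norm_mul, norm_pow, hωabs, one_pow, one_mul]; exact hz1
    have hk : ∀ k : ℕ, HasSum (fun s : ℕ => a s * (ω ^ k * z) ^ s) (f (ω ^ k * z)) :=
      fun k => hsum _ (hrot k)
    have hS : HasSum (fun s : ℕ => ∑ k ∈ Finset.range n, a s * (ω ^ k * z) ^ s)
        (∑ k ∈ Finset.range n, f (ω ^ k * z)) := hasSum_sum fun k _ => hk k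
    set T := ∑ k ∈ Finset.range n, f (ω ^ k * z) with hT
    have hfun : (fun s : ℕ => ∑ k ∈ Finset.range n, a s * (ω ^ k * z) ^ s)
        = fun s : ℕ => if n ∣ s then (n : ℂ) * (a s * z ^ s) else 0 := by
      funext s
      have h1 : ∀ k ∈ Finset.range n, a s * (ω ^ k * z) ^ s = (ω ^ s) ^ k * (a s * z ^ s) := by
        intro k _
        rw [mul_pow, ← pow_mul, mul_comm k s, pow_mul]
        ring
      rw [Finset.sum_congr rfl h1, ← Finset.sum_mul, root_filter hn s]
      split_ifs <;> simp
    rw [hfun] at hS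
    have hinj : Function.Injective (fun j : ℕ => n * j) := fun x y h =>
      Nat.eq_of_mul_eq_mul_left hn h
    have hsupp : ∀ s ∉ Set.range (fun j : ℕ => n * j),
        (if n ∣ s then (n : ℂ) * (a s * z ^ s) else 0) = 0 := by
      intro s hs
      rw [if_neg]
      rintro ⟨j, rfl⟩
      exact hs ⟨j, rfl⟩
    have hS2 := (hinj.hasSum_iff hsupp).mpr hS
    have hS3 : HasSum (fun j : ℕ => a (n * j) * z ^ (n * j)) (T / n) := by
      have h4 := hS2.div_const (n : ℂ)
      have h5 : (fun j : ℕ =>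
          ((fun s : ℕ => if n ∣ s then (n : ℂ) * (a s * z ^ s) else 0) ∘ fun j : ℕ => n * j) j
            / (n : ℂ))
          = fun j : ℕ => a (n * j) * z ^ (n * j) := by
        funext j
        have h6 : n ∣ n * j := dvd_mul_right n j
        show (if n ∣ n * j then (n : ℂ) * (a (n * j) * z ^ (n * j)) else 0) / n
          = a (n * j) * z ^ (n * j)
        rw [if_pos h6]
        exact mul_div_cancel_left₀ _ (Nat.cast_ne_zero.mpr hn.ne')
      rwa [h5] at h4
    have hHw : H w = T / n := by
      rw [← hzn, hHval]
      have h7 : ∀ j : ℕ, a (n*j) * (z ^ n) ^ j = a (n*j) * z ^ (n*j) := fun j => by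
        rw [← pow_mul]
      rw [tsum_congr h7, hS3.tsum_eq]
    rw [hHw, norm_div, Complex.norm_natCast]
    have hTle : ‖T‖ ≤ n := by
      calc ‖T‖ ≤ ∑ k ∈ Finset.range n, ‖f (ω ^ k * z)‖ := norm_sum_le _ _
      _ ≤ ∑ k ∈ Finset.range n, 1 := Finset.sum_le_sum fun k _ => hb _ (hrot k)
      _ = n := by simp
    rw [div_le_one (by exact_mod_cast hn)]
    exact hTle
  by_cases hclt : ‖a 0‖ < 1
  · set d : ℂ := (starRingEnd ℂ) (a 0) with hd
    set F : ℂ → ℂ := fun w => (H w - a 0) / (1 - d * H w) with hF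
    have hden : ∀ w : ℂ, ‖w‖ < 1 → 1 - d * H w ≠ 0 := by
      intro w hw hzero
      have h1 : (1 : ℂ) = d * H w := by linear_combination hzero
      have h2 : (1 : ℝ) ≤ ‖a 0‖ := by
        calc (1:ℝ) = ‖d * H w‖ := by rw [← h1]; simp
        _ ≤ ‖a 0‖ * 1 := by
            rw [norm_mul]
            gcongr
            · rw [hd, RCLike.norm_conj]
            · exact hHle w hw
        _ = ‖a 0‖ := mul_one _
      linarith
    have hFdiff : DifferentiableOn ℂ F (ball (0:ℂ) 1) := by
      apply DifferentiableOn.div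
      · exact hdiff.sub (differentiableOn_const _)
      · exact (differentiableOn_const _).sub ((differentiableOn_const _).mul hdiff)
      · intro w hw
        exact hden w (by simpa [mem_ball, dist_eq_norm] using hw)
    have hF0 : F 0 = 0 := by rw [hF]; simp [hH0]
    have hFle : ∀ w ∈ ball (0:ℂ) 1, ‖F w‖ ≤ 1 := by
      intro w hw
      have hw' : ‖w‖ < 1 := by simpa [mem_ball, dist_eq_norm] using hw
      rw [hF]
      simp only []
      rw [norm_div]
      have hpos : 0 < ‖1 - d * H w‖ := norm_pos_iff.mpr (hden w hw')
      rw [div_le_one hpos]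
      exact mobius_norm ha0le (hHle w hw')
    have hFd1 : ‖deriv F 0‖ ≤ 1 := by
      refine le_of_forall_pos_le_add fun ε hε => ?_
      have hmaps : Set.MapsTo F (ball (0:ℂ) 1) (ball (F 0) (1 + ε)) := by
        intro w hw
        rw [hF0, mem_ball, dist_eq_norm, sub_zero]
        exact lt_of_le_of_lt (hFle w hw) (by linarith)
      have := Complex.norm_deriv_le_div_of_mapsTo_ball hFdiff (hmaps.mono_right ball_subset_closedBall) one_pos
      simpa using this
    have hH0d : HasDerivAt H (a n) 0 := by
      have h1 : DifferentiableAt ℂ H 0 :=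
        hdiff.differentiableAt (isOpen_ball.mem_nhds (mem_ball_self one_pos))
      have h2 := h1.hasDerivAt
      rwa [hderiv] at h2
    have hnum : HasDerivAt (fun w => H w - a 0) (a n) 0 := hH0d.sub_const _
    have hdenH : HasDerivAt (fun w => 1 - d * H w) (-(d * a n)) 0 := by
      have h3 := (hH0d.const_mul d).const_sub 1
      simpa using h3
    have hden0 : 1 - d * H 0 ≠ 0 := hden 0 (by simp)
    have hFder := hnum.div hdenH hden0
    have hne : (1 : ℂ) - d * a 0 ≠ 0 := by rwa [hH0] at hden0
    have hval : a n = deriv F 0 * (1 - d * a 0) := by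
      rw [show F = ((fun w => H w - a 0) / fun w => 1 - d * H w) from rfl, hFder.deriv, hH0]
      field_simp
      ring
    have hDnorm : ‖(1 : ℂ) - d * a 0‖ = 1 - ‖a 0‖ ^ 2 := by
      have hDval : d * a 0 = ((‖a 0‖ ^ 2 : ℝ) : ℂ) := by
        rw [hd, mul_comm, Complex.mul_conj, Complex.normSq_eq_norm_sq]
        try norm_cast
      rw [hDval, ← Complex.ofReal_one, ← Complex.ofReal_sub, Complex.norm_real]
      exact _root_.abs_of_nonneg (by linarith)
    calc ‖a n‖ = ‖deriv F 0‖ * (1 - ‖a 0‖ ^ 2) := by rw [hval, norm_mul, hDnorm]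
    _ ≤ 1 * (1 - ‖a 0‖ ^ 2) := by
        apply mul_le_mul_of_nonneg_right hFd1
        linarith
    _ = 1 - ‖a 0‖ ^ 2 := one_mul _
  · have heq : ‖a 0‖ = 1 := le_antisymm ha0le (not_lt.mp hclt)
    have hmax : IsMaxOn (norm ∘ H) (ball (0:ℂ) 1) 0 := by
      intro w hw
      have hw' : ‖w‖ < 1 := by simpa [mem_ball, dist_eq_norm] using hw
      show ‖H w‖ ≤ ‖H 0‖
      rw [hH0, heq]
      exact hHle w hw'
    have hEq := Complex.eqOn_of_isPreconnected_of_isMaxOn_norm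
      (convex_ball (0:ℂ) 1).isPreconnected isOpen_ball hdiff (mem_ball_self one_pos) hmax
    have hder0 : deriv H 0 = 0 := by
      have hEv : H =ᶠ[nhds (0:ℂ)] fun _ => H 0 :=
        Filter.eventuallyEq_of_mem (isOpen_ball.mem_nhds (mem_ball_self one_pos)) hEq
      rw [hEv.deriv_eq, deriv_const]
    rw [← hderiv, hder0, norm_zero, heq]
    norm_num

theorem stmt_7 (f : ℂ → ℂ) (a : ℕ → ℂ)
    (hsum : ∀ z : ℂ, ‖z‖ < 1 → HasSum (fun s : ℕ => a s * z ^ s) (f z))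
    (hb : ∀ z : ℂ, ‖z‖ < 1 → ‖f z‖ ≤ 1)
    (r : ℝ) (hr0 : 0 ≤ r) (hr1 : r < 1) :
    ∑' s : ℕ, ‖a (s + 1)‖ * r ^ (s + 1) ≤ (1 - ‖a 0‖ ^ 2) * r / (1 - r) := by
  have hkey : ∀ s : ℕ, ‖a (s + 1)‖ ≤ 1 - ‖a 0‖ ^ 2 := fun s =>
    coeff_bound_s7 f a hsum hb (s + 1) s.succ_pos
  have h1 : 0 ≤ 1 - ‖a 0‖ ^ 2 := le_trans (norm_nonneg _) (hkey 0)
  have hmaj : Summable (fun s : ℕ => (1 - ‖a 0‖ ^ 2) * r ^ (s + 1)) := by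
    apply Summable.congr (((summable_geometric_of_lt_one hr0 hr1).mul_left
      ((1 - ‖a 0‖ ^ 2) * r)))
    intro s
    rw [pow_succ]
    ring
  have hle : ∀ s : ℕ, ‖a (s + 1)‖ * r ^ (s + 1) ≤ (1 - ‖a 0‖ ^ 2) * r ^ (s + 1) :=
    fun s => mul_le_mul_of_nonneg_right (hkey s) (pow_nonneg hr0 _)
  have hsumm : Summable (fun s : ℕ => ‖a (s + 1)‖ * r ^ (s + 1)) :=
    Summable.of_nonneg_of_le (fun s => by positivity) hle hmaj
  calc ∑' s : ℕ, ‖a (s + 1)‖ * r ^ (s + 1) ≤ ∑' s : ℕ, (1 - ‖a 0‖ ^ 2) * r ^ (s + 1) :=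
      hsumm.tsum_le_tsum hle hmaj
  _ = (1 - ‖a 0‖ ^ 2) * r / (1 - r) := by
      have h2 : (fun s : ℕ => (1 - ‖a 0‖ ^ 2) * r ^ (s + 1))
          = fun s : ℕ => ((1 - ‖a 0‖ ^ 2) * r) * r ^ s := by
        funext s; rw [pow_succ]; ring
      rw [h2, tsum_mul_left, tsum_geometric_of_lt_one hr0 hr1, div_eq_mul_inv]
end

section
/- Let b ∈ [0,1), p ∈ (0,1], N ≥ 1, and d₁,…,d_N ≥ 0 satisfy 8d₁M_p² + 6c₂d₂M_p⁴ + ⋯ + 2(2N-1)c_N d_N M_p^{2N} ≤ p, where M_p = p(2+p)/(4p+4) and c_s = max_{t∈[0,1]} t(1+t)²(1-t²)^{2s-2} for s ≥ 2 (with c₁ interpreted via the bound b(1+b)² ≤ 4). Then Φ(b) := p + 2·Σ_{s=1}^{N} d_s (1-b²)^{2s-1} M_p^{2s} - 2p/(1+b) ≤ 0 for all b ∈ [0,1]. -/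
theorem stmt_12 (p : ℝ) (hp0 : 0 < p) (hp1 : p ≤ 1) (N : ℕ) (hN : 1 ≤ N)
    (d : ℕ → ℝ) (hd : ∀ s, 0 ≤ d s)
    (M : ℝ) (hM : M = p * (2 + p) / (4 * p + 4))
    (c : ℕ → ℝ)
    (hc : ∀ s : ℕ, 2 ≤ s →
      IsGreatest ((fun t : ℝ => t * (1 + t) ^ 2 * (1 - t ^ 2) ^ (2 * s - 2)) '' Set.Icc 0 1) (c s))
    (hcoef : 8 * d 1 * M ^ 2 +
      (∑ s ∈ Finset.Icc 2 N, 2 * (2 * (s : ℝ) - 1) * c s * d s * M ^ (2 * s)) ≤ p) :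
    ∀ b ∈ Set.Icc (0 : ℝ) 1,
      p + 2 * (∑ s ∈ Finset.Icc 1 N, d s * (1 - b ^ 2) ^ (2 * s - 1) * M ^ (2 * s))
        - 2 * p / (1 + b) ≤ 0 := by
  set F : ℝ → ℝ := fun x =>
    p + 2 * (∑ s ∈ Finset.Icc 1 N, d s * (1 - x ^ 2) ^ (2 * s - 1) * M ^ (2 * s))
      - 2 * p / (1 + x) with hFdef
  set F' : ℝ → ℝ := fun x =>
    2 * (∑ s ∈ Finset.Icc 1 N,
      d s * ((2 * (s : ℝ) - 1) * (1 - x ^ 2) ^ (2 * s - 2) * (-(2 * x))) * M ^ (2 * s))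
      + 2 * p / (1 + x) ^ 2 with hF'def
  -- derivative
  have hderiv : ∀ x : ℝ, -1 < x → HasDerivAt F (F' x) x := by
    intro x hx
    have hx0 : (1 : ℝ) + x ≠ 0 := by linarith
    have hsum : HasDerivAt
        (fun x : ℝ => ∑ s ∈ Finset.Icc 1 N, d s * (1 - x ^ 2) ^ (2 * s - 1) * M ^ (2 * s))
        (∑ s ∈ Finset.Icc 1 N,
          d s * ((2 * (s : ℝ) - 1) * (1 - x ^ 2) ^ (2 * s - 2) * (-(2 * x))) * M ^ (2 * s)) x := by
      apply HasDerivAt.fun_sum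
      intro s hs
      have hs1 : 1 ≤ s := (Finset.mem_Icc.mp hs).1
      have h0 : HasDerivAt (fun x : ℝ => 1 - x ^ 2) (-(2 * x)) x := by
        simpa using ((hasDerivAt_pow 2 x).const_sub 1)
      have h1 := ((h0.pow (2 * s - 1)).const_mul (d s)).mul_const (M ^ (2 * s))
      refine h1.congr_deriv ?_
      have he : 2 * s - 1 - 1 = 2 * s - 2 := by omega
      rw [he]
      have hcast : ((2 * s - 1 : ℕ) : ℝ) = 2 * (s : ℝ) - 1 := by
        push_cast [Nat.cast_sub (by omega : 1 ≤ 2 * s)]; ring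
      rw [hcast]
    have hdiv : HasDerivAt (fun x : ℝ => 2 * p / (1 + x))
        ((0 * (1 + x) - 2 * p * 1) / (1 + x) ^ 2) x := by
      exact (hasDerivAt_const x (2 * p)).div ((hasDerivAt_id x).const_add 1) hx0
    have h := ((hsum.const_mul 2).const_add p).sub hdiv
    refine h.congr_deriv ?_
    simp only [hF'def]
    rw [zero_mul, zero_sub, mul_one, neg_div]
    ring
  intro b hb
  obtain ⟨hb0, hb1⟩ := hb
  have hMsq : ∀ s : ℕ, 0 ≤ M ^ (2 * s) := by
    intro s
    rw [pow_mul]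
    positivity
  -- F' nonneg on [0,1]
  have hF'nonneg : ∀ x ∈ Set.Icc (0 : ℝ) 1, 0 ≤ F' x := by
    intro x hx
    obtain ⟨hx0, hx1⟩ := hx
    have hT : (∑ s ∈ Finset.Icc 1 N,
        2 * (2 * (s : ℝ) - 1) * d s * (x * (1 + x) ^ 2 * (1 - x ^ 2) ^ (2 * s - 2)) * M ^ (2 * s))
        ≤ p := by
      have hsplit : Finset.Icc 1 N = insert 1 (Finset.Icc 2 N) := by
        ext k; simp only [Finset.mem_Icc, Finset.mem_insert]; omega
      rw [hsplit, Finset.sum_insert (by simp)]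
      have h1 : 2 * (2 * ((1:ℕ) : ℝ) - 1) * d 1 * (x * (1 + x) ^ 2 * (1 - x ^ 2) ^ (2 * 1 - 2)) * M ^ (2 * 1)
          ≤ 8 * d 1 * M ^ 2 := by
        have hb4 : x * (1 + x) ^ 2 ≤ 4 := by nlinarith
        have hM2 : (0:ℝ) ≤ M ^ 2 := sq_nonneg M
        push_cast
        norm_num
        nlinarith [mul_nonneg (mul_nonneg (hd 1) hM2) (by linarith : (0:ℝ) ≤ 4 - x * (1 + x) ^ 2)]
      have h2 : ∑ s ∈ Finset.Icc 2 N,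
          2 * (2 * (s : ℝ) - 1) * d s * (x * (1 + x) ^ 2 * (1 - x ^ 2) ^ (2 * s - 2)) * M ^ (2 * s)
          ≤ ∑ s ∈ Finset.Icc 2 N, 2 * (2 * (s : ℝ) - 1) * c s * d s * M ^ (2 * s) := by
        apply Finset.sum_le_sum
        intro s hs
        have hs2 : 2 ≤ s := (Finset.mem_Icc.mp hs).1
        have hcs : x * (1 + x) ^ 2 * (1 - x ^ 2) ^ (2 * s - 2) ≤ c s :=
          (hc s hs2).2 ⟨x, ⟨hx0, hx1⟩, rfl⟩
        have hfac : (0:ℝ) ≤ 2 * (2 * (s : ℝ) - 1) := by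
          have : (2:ℝ) ≤ (s:ℝ) := by exact_mod_cast hs2
          linarith
        nlinarith [mul_le_mul_of_nonneg_left hcs (mul_nonneg (mul_nonneg hfac (hd s)) (hMsq s))]
      calc _ ≤ 8 * d 1 * M ^ 2 + ∑ s ∈ Finset.Icc 2 N,
              2 * (2 * (s : ℝ) - 1) * c s * d s * M ^ (2 * s) := add_le_add h1 h2
        _ ≤ p := hcoef
    -- relate F' to T
    have hx2 : (0:ℝ) < (1 + x) ^ 2 := by positivity
    have hB : ∑ s ∈ Finset.Icc 1 N,
        (1 + x) ^ 2 * (d s * ((2 * (s : ℝ) - 1) * (1 - x ^ 2) ^ (2 * s - 2) * (-(2 * x))) * M ^ (2 * s))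
        = ∑ s ∈ Finset.Icc 1 N,
        -(2 * (2 * (s : ℝ) - 1) * d s * (x * (1 + x) ^ 2 * (1 - x ^ 2) ^ (2 * s - 2)) * M ^ (2 * s)) :=
      Finset.sum_congr rfl (fun s _ => by ring)
    have hkey : (1 + x) ^ 2 * F' x = 2 * (p - (∑ s ∈ Finset.Icc 1 N,
        2 * (2 * (s : ℝ) - 1) * d s * (x * (1 + x) ^ 2 * (1 - x ^ 2) ^ (2 * s - 2)) * M ^ (2 * s))) := by
      have hA : (1 + x) ^ 2 * (2 * p / (1 + x) ^ 2) = 2 * p := by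
        field_simp
      calc (1 + x) ^ 2 * F' x
          = 2 * (∑ s ∈ Finset.Icc 1 N, (1 + x) ^ 2 *
              (d s * ((2 * (s : ℝ) - 1) * (1 - x ^ 2) ^ (2 * s - 2) * (-(2 * x))) * M ^ (2 * s)))
            + (1 + x) ^ 2 * (2 * p / (1 + x) ^ 2) := by
            simp only [hF'def]
            rw [← Finset.mul_sum]
            ring
        _ = 2 * (p - (∑ s ∈ Finset.Icc 1 N,
              2 * (2 * (s : ℝ) - 1) * d s * (x * (1 + x) ^ 2 * (1 - x ^ 2) ^ (2 * s - 2)) * M ^ (2 * s))) := by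
            rw [hB, hA, Finset.sum_neg_distrib]
            ring
    nlinarith [hkey]
  -- monotone
  have hmono : MonotoneOn F (Set.Icc (0:ℝ) 1) := by
    apply monotoneOn_of_deriv_nonneg (convex_Icc 0 1)
    · intro x hx
      exact (hderiv x (by linarith [hx.1])).continuousAt.continuousWithinAt
    · intro x hx
      rw [interior_Icc] at hx
      exact (hderiv x (by linarith [hx.1])).differentiableAt.differentiableWithinAt
    · intro x hx
      rw [interior_Icc] at hx
      rw [(hderiv x (by linarith [hx.1])).deriv]
      exact hF'nonneg x ⟨le_of_lt hx.1, le_of_lt hx.2⟩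
  have hF1 : F 1 = 0 := by
    simp only [hFdef]
    have hz : ∀ s ∈ Finset.Icc 1 N, d s * ((1:ℝ) - 1 ^ 2) ^ (2 * s - 1) * M ^ (2 * s) = 0 := by
      intro s hs
      have : 2 * s - 1 ≠ 0 := by have := (Finset.mem_Icc.mp hs).1; omega
      simp [zero_pow this]
    rw [Finset.sum_congr rfl hz]
    norm_num
  have hle := hmono ⟨hb0, hb1⟩ (Set.mem_Icc.mpr ⟨zero_le_one, le_refl 1⟩) hb1
  rw [hF1] at hle
  exact hle
end

section
/- Let p ∈ (0,2], b ∈ [0,1), m₁ ≥ 1 an integer, and r ∈ (0,1) with r ≤ R₂(p), where R₂(p) ∈ (0,1) is the root of r/(1-r) + r^{m₁}/(1-r^{m₁}) = p/2. Then b^p + (1-b²)·r/(1-r) + (1-b²)·r^{m₁}/(1-r^{m₁}) ≤ 1. -/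
theorem stmt_15 (p : ℝ) (hp0 : 0 < p) (hp2 : p ≤ 2) (b : ℝ) (hb0 : 0 ≤ b) (hb1 : b < 1)
    (m₁ : ℕ) (hm : 1 ≤ m₁) (R r : ℝ) (hR : R ∈ Set.Ioo (0 : ℝ) 1)
    (hRroot : R / (1 - R) + R ^ m₁ / (1 - R ^ m₁) = p / 2)
    (hr : r ∈ Set.Ioo (0 : ℝ) 1) (hrR : r ≤ R) :
    b ^ p + (1 - b ^ 2) * r / (1 - r) + (1 - b ^ 2) * r ^ m₁ / (1 - r ^ m₁) ≤ 1 := by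
  obtain ⟨hR0, hR1⟩ := hR
  obtain ⟨hr0, hr1⟩ := hr
  have hb2 : b ^ 2 < 1 := by nlinarith
  have hb2' : (0:ℝ) ≤ 1 - b ^ 2 := by linarith
  -- Bernoulli: b^p ≤ 1 + (p/2) * (b^2 - 1)
  have hbern : b ^ p ≤ 1 + (p/2) * (b ^ 2 - 1) := by
    have h1 : (1 + (b ^ 2 - 1)) ^ (p/2) ≤ 1 + (p/2) * (b ^ 2 - 1) :=
      rpow_one_add_le_one_add_mul_self (by nlinarith) (by linarith) (by linarith)
    have h2 : b ^ p = (b ^ 2) ^ (p/2) := by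
      rw [← Real.rpow_natCast b 2, ← Real.rpow_mul hb0]
      ring_nf
    rw [h2]
    simpa using h1
  -- monotonicity of x ↦ x/(1-x)
  have mono : ∀ x y : ℝ, 0 ≤ x → x ≤ y → y < 1 → x / (1 - x) ≤ y / (1 - y) := by
    intro x y hx hxy hy1
    rw [div_le_div_iff₀ (by linarith) (by linarith)]
    nlinarith
  have hrm1 : r ^ m₁ < 1 := pow_lt_one₀ (le_of_lt hr0) hr1 (by omega)
  have hRm1 : R ^ m₁ < 1 := pow_lt_one₀ (le_of_lt hR0) hR1 (by omega)
  have h1 : r / (1 - r) ≤ R / (1 - R) := mono r R (le_of_lt hr0) hrR hR1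
  have h2 : r ^ m₁ / (1 - r ^ m₁) ≤ R ^ m₁ / (1 - R ^ m₁) :=
    mono _ _ (pow_nonneg (le_of_lt hr0) _) (pow_le_pow_left₀ (le_of_lt hr0) hrR _) hRm1
  have hsum : r / (1 - r) + r ^ m₁ / (1 - r ^ m₁) ≤ p / 2 := by
    rw [← hRroot]; linarith
  have key : (1 - b ^ 2) * (r / (1 - r) + r ^ m₁ / (1 - r ^ m₁)) ≤ (1 - b ^ 2) * (p / 2) :=
    mul_le_mul_of_nonneg_left hsum hb2'
  have e1 : (1 - b ^ 2) * r / (1 - r) = (1 - b ^ 2) * (r / (1 - r)) := by ring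
  have e2 : (1 - b ^ 2) * r ^ m₁ / (1 - r ^ m₁) = (1 - b ^ 2) * (r ^ m₁ / (1 - r ^ m₁)) := by ring
  rw [e1, e2]
  nlinarith [key, hbern]
end

section
/- Let p ∈ (0,2], q ≥ 1, m ≥ 0, m₁, m₂ ≥ 1 integers, μ, ν ≥ 0 with μ+ν > 0, b ∈ [0,1), and r ∈ (0,1). If 2μ·r^{q+m}/(1-r^q) + 2ν·r^{m₂}/(1-r^{m₂}) ≤ p·(1-r^{m₁})/(1+r^{m₁}), then ((b + r^{m₁})/(1 + b r^{m₁}))^p + μ(1-b²)·r^{q+m}/(1-r^q) + ν(1-b²)·r^{m₂}/(1-r^{m₂}) ≤ 1. -/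
/-- Key scalar inequality: for `x ∈ [0,1]` and `p ∈ (0,2]`,
`x ^ p ≤ 1 - (p/2) * (1 - x^2)`. -/
lemma rpow_le_one_sub_half_mul {x p : ℝ} (hx0 : 0 ≤ x) (hx1 : x ≤ 1)
    (hp0 : 0 < p) (hp2 : p ≤ 2) : x ^ p ≤ 1 - p / 2 * (1 - x ^ 2) := by
  have hs : (-1 : ℝ) ≤ x ^ 2 - 1 := by nlinarith
  have h := rpow_one_add_le_one_add_mul_self hs (p := p / 2)
    (by positivity) (by linarith)
  have hx2 : (1 : ℝ) + (x ^ 2 - 1) = x ^ 2 := by ring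
  rw [hx2] at h
  have hxp : (x ^ 2 : ℝ) ^ (p / 2) = x ^ p := by
    rw [← Real.rpow_natCast x 2, ← Real.rpow_mul hx0]
    congr 1
    push_cast
    ring
  rw [hxp] at h
  linarith

theorem stmt_16 (p : ℝ) (hp0 : 0 < p) (hp2 : p ≤ 2) (q m m₁ m₂ : ℕ)
    (hq : 1 ≤ q) (hm₁ : 1 ≤ m₁) (hm₂ : 1 ≤ m₂)
    (μ ν : ℝ) (hμ : 0 ≤ μ) (hν : 0 ≤ ν) (hμν : 0 < μ + ν)
    (b : ℝ) (hb0 : 0 ≤ b) (hb1 : b < 1) (r : ℝ) (hr0 : 0 < r) (hr1 : r < 1)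
    (hroot : 2 * μ * r ^ (q + m) / (1 - r ^ q) + 2 * ν * r ^ m₂ / (1 - r ^ m₂) ≤
      p * ((1 - r ^ m₁) / (1 + r ^ m₁))) :
    ((b + r ^ m₁) / (1 + b * r ^ m₁)) ^ p +
      μ * (1 - b ^ 2) * r ^ (q + m) / (1 - r ^ q) +
      ν * (1 - b ^ 2) * r ^ m₂ / (1 - r ^ m₂) ≤ 1 := by
  set t : ℝ := r ^ m₁ with ht
  have ht0 : 0 < t := pow_pos hr0 _
  have ht1 : t < 1 := pow_lt_one₀ hr0.le hr1 (by omega)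
  have hden : (0 : ℝ) < 1 + b * t := by nlinarith
  set X : ℝ := (b + t) / (1 + b * t) with hX
  have hX0 : 0 ≤ X := by positivity
  have hX1 : X ≤ 1 := by
    rw [div_le_one hden]; nlinarith
  -- auxiliary positivity facts
  have hq0 : 0 < 1 - r ^ q := by
    have : r ^ q < 1 := pow_lt_one₀ hr0.le hr1 (by omega)
    linarith
  have hm₂0 : 0 < 1 - r ^ m₂ := by
    have : r ^ m₂ < 1 := pow_lt_one₀ hr0.le hr1 (by omega)
    linarith
  have hrqm : 0 < r ^ (q + m) := pow_pos hr0 _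
  have hrm₂ : 0 < r ^ m₂ := pow_pos hr0 _
  set S : ℝ := μ * r ^ (q + m) / (1 - r ^ q) + ν * r ^ m₂ / (1 - r ^ m₂) with hS
  have hS0 : 0 ≤ S := by positivity
  have hroot' : 2 * S ≤ p * ((1 - t) / (1 + t)) := by
    have : 2 * S = 2 * μ * r ^ (q + m) / (1 - r ^ q) + 2 * ν * r ^ m₂ / (1 - r ^ m₂) := by
      rw [hS]; ring
    linarith [hroot, this ▸ le_refl (2 * S)]
  -- 1 - X^2 ≥ (1-b^2)(1-t)/(1+t)
  have hb2' : (0:ℝ) ≤ 1 - b ^ 2 := by nlinarith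
  have hkey1 : (1 - b ^ 2) * ((1 - t) / (1 + t)) ≤ 1 - X ^ 2 := by
    have h1 : 1 - X ^ 2 = (1 - b ^ 2) * (1 - t ^ 2) / (1 + b * t) ^ 2 := by
      rw [hX]; field_simp; ring
    rw [h1, ← mul_div_assoc, div_le_div_iff₀ (by linarith) (by positivity)]
    have hid : (1 - b ^ 2) * (1 - t ^ 2) * (1 + t) - (1 - b ^ 2) * (1 - t) * (1 + b * t) ^ 2
        = (1 - b ^ 2) * (1 - t) * ((1 - b) * t * (2 + t + b * t)) := by ring
    have hpos : 0 ≤ (1 - b ^ 2) * (1 - t) * ((1 - b) * t * (2 + t + b * t)) := by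
      have h2 : (0:ℝ) ≤ 2 + t + b * t := by positivity
      have h3 : (0:ℝ) ≤ 1 - b := by linarith
      have h4 : (0:ℝ) ≤ 1 - t := by linarith
      positivity
    linarith
  have hXp : X ^ p ≤ 1 - p / 2 * (1 - X ^ 2) :=
    rpow_le_one_sub_half_mul hX0 hX1 hp0 hp2
  -- combine
  have hb2 : 0 ≤ 1 - b ^ 2 := by nlinarith
  have hfin : (1 - b ^ 2) * S ≤ p / 2 * (1 - X ^ 2) := by
    calc (1 - b ^ 2) * S ≤ (1 - b ^ 2) * (p / 2 * ((1 - t) / (1 + t))) := by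
          apply mul_le_mul_of_nonneg_left _ hb2
          linarith
      _ = p / 2 * ((1 - b ^ 2) * ((1 - t) / (1 + t))) := by ring
      _ ≤ p / 2 * (1 - X ^ 2) := by
          apply mul_le_mul_of_nonneg_left hkey1 (by positivity)
  have hrw : μ * (1 - b ^ 2) * r ^ (q + m) / (1 - r ^ q) +
      ν * (1 - b ^ 2) * r ^ m₂ / (1 - r ^ m₂) = (1 - b ^ 2) * S := by
    rw [hS]; ring
  linarith [hXp, hfin, hrw ▸ le_refl ((1 - b ^ 2) * S)]
end

section
/- For p ∈ (0,2], b ∈ [0,1), and t ∈ [0,1): 1 - ((b+t)/(1+bt))^p ≥ (p/2)·(1-b²)·(1-t)/(1+t). -/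
theorem stmt_17 (p : ℝ) (hp0 : 0 < p) (hp2 : p ≤ 2) (b t : ℝ)
    (hb0 : 0 ≤ b) (hb1 : b < 1) (ht0 : 0 ≤ t) (ht1 : t < 1) :
    1 - ((b + t) / (1 + b * t)) ^ p ≥ p / 2 * (1 - b ^ 2) * ((1 - t) / (1 + t)) := by
  have hbt : 0 < 1 + b * t := by nlinarith
  set x := (b + t) / (1 + b * t) with hx
  have hx0 : 0 ≤ x := div_nonneg (by linarith) hbt.le
  have hx1 : x ≤ 1 := by
    rw [hx, div_le_one hbt]; nlinarith
  have hbern : x ^ p ≤ 1 + p / 2 * (x ^ 2 - 1) := by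
    have h := rpow_one_add_le_one_add_mul_self (s := x ^ 2 - 1) (by nlinarith)
      (p := p / 2) (by linarith) (by linarith)
    rw [show (1 : ℝ) + (x ^ 2 - 1) = x ^ 2 by ring] at h
    calc x ^ p = (x ^ 2) ^ (p / 2) := by
          rw [← Real.rpow_natCast x 2, ← Real.rpow_mul hx0]
          norm_num
          congr 1
          ring
      _ ≤ 1 + p / 2 * (x ^ 2 - 1) := h
  have h1t : 0 < 1 + t := by linarith
  have key : (1 - b ^ 2) * ((1 - t) / (1 + t)) ≤ 1 - x ^ 2 := by
    have h2 : 1 - x ^ 2 = (1 - b ^ 2) * (1 - t ^ 2) / (1 + b * t) ^ 2 := by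
      rw [hx]; field_simp; ring
    rw [h2, mul_div_assoc', div_le_div_iff₀ h1t (by positivity)]
    nlinarith [mul_nonneg (mul_nonneg (mul_nonneg
      (by nlinarith : (0:ℝ) ≤ 1 - b ^ 2) (by linarith : (0:ℝ) ≤ 1 - t))
      (mul_nonneg ht0 (by linarith : (0:ℝ) ≤ 1 - b)))
      (by nlinarith : (0:ℝ) ≤ 2 + t + b * t)]
  have hmul := mul_le_mul_of_nonneg_left key (by linarith : (0:ℝ) ≤ p / 2)
  nlinarith [hmul, hbern]
end
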